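/- For every integer k and every integer n ≥ 1, one has C_{n-1}^{(k-1)}(1) = Σ_{l=0}^{n-1} (-1)^l l! C(n, l+1) C_{n-l-1}^{(k)}. -/

import Mathlib

open PowerSeries Finset

/-- Composition `F(G(t))` of formal power series (intended for `G` with zero
constant term, in which case `coeff n (G ^ m) = 0` for `m > n` and the finite
sum below computes the usual composition). -/
noncomputable def psComp (F G : PowerSeries ℝ) : PowerSeries ℝ :=
  PowerSeries.mk fun n => ∑ m ∈ Finset.range (n + 1),
    (PowerSeries.coeff m F) * (PowerSeries.coeff n (G ^ m))

/-- The formal power series of `log (1 + t)`. -/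
noncomputable def logSeries : PowerSeries ℝ :=
  PowerSeries.mk fun n => if n = 0 then 0 else (-1) ^ (n + 1) / n

/-- The polylogarithm factorial function `Lif_k(t) = ∑_{m ≥ 0} t^m / (m! (m+1)^k)`. -/
noncomputable def Lif (k : ℤ) : PowerSeries ℝ :=
  PowerSeries.mk fun m => 1 / ((m.factorial : ℝ) * ((m : ℝ) + 1) ^ k)

/-- The poly-Cauchy polynomial of the first kind `C_n^{(k)}(x)`, defined by
`Lif_k(log(1+t)) / (1+t)^x = ∑_{n ≥ 0} C_n^{(k)}(x) t^n / n!`, where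
`(1+t)^{-x} = exp (-x · log (1+t))`. -/
noncomputable def polyCauchy (k : ℤ) (n : ℕ) (x : ℝ) : ℝ :=
  (n.factorial : ℝ) * PowerSeries.coeff n
    (psComp (Lif k) logSeries *
      psComp (PowerSeries.rescale (-x) (PowerSeries.exp ℝ)) logSeries)

/-- The (signed) Stirling numbers of the first kind `S₁(l, m)`, defined by
`(log (1+t))^m = m! ∑_{l ≥ m} S₁(l,m) t^l / l!`. -/
noncomputable def S1 (l m : ℕ) : ℝ :=
  (l.factorial : ℝ) / (m.factorial : ℝ) * PowerSeries.coeff l (logSeries ^ m)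

/-- The ordinary Bernoulli numbers, via `t/(e^t - 1) = ∑ B_n t^n/n!`;
here `(mk fun m => 1/(m+1)!)` is the series `(e^t - 1)/t`. -/
noncomputable def Bern (n : ℕ) : ℝ :=
  (n.factorial : ℝ) * PowerSeries.coeff n
    (PowerSeries.mk fun m => (1 : ℝ) / (m + 1).factorial)⁻¹

/-- The Bernoulli polynomial of order `r`, via `(t/(e^t-1))^r e^{xt} = ∑ B_n^{(r)}(x) t^n/n!`. -/
noncomputable def bernPoly (r : ℕ) (n : ℕ) (x : ℝ) : ℝ :=
  (n.factorial : ℝ) * PowerSeries.coeff n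
    (((PowerSeries.mk fun m => (1 : ℝ) / (m + 1).factorial)⁻¹) ^ r *
      PowerSeries.rescale x (PowerSeries.exp ℝ))

/-- The series `log(1+t)/t`, so that `t / log(1+t) = Dlog⁻¹`. -/
noncomputable def Dlog : PowerSeries ℝ :=
  PowerSeries.mk fun n => (-1) ^ n / ((n : ℝ) + 1)

/-- The Cauchy numbers of the first kind, via `t/log(1+t) = ∑ C_n t^n/n!`. -/
noncomputable def cauchyNum (n : ℕ) : ℝ :=
  (n.factorial : ℝ) * PowerSeries.coeff n Dlog⁻¹

/-- The numbers `T_n^{(r,k)}`, via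
`(t/log(1+t))^r · Lif_k(log(1+t)) = ∑ T_n^{(r,k)} t^n/n!`. -/
noncomputable def T (r : ℕ) (k : ℤ) (n : ℕ) : ℝ :=
  (n.factorial : ℝ) * PowerSeries.coeff n (Dlog⁻¹ ^ r * psComp (Lif k) logSeries)

/-- The rising factorial `x^{(m)} = x (x+1) ⋯ (x+m-1)`. -/
noncomputable def risingFactorial (x : ℝ) (m : ℕ) : ℝ :=
  ∏ i ∈ Finset.range m, (x + i)

/-- Carlitz's polynomials `β_n^{(r)}(x)`, via `(t/log(1+t))^r (1+t)^x = ∑ β_n^{(r)}(x) t^n/n!`,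
where `(1+t)^x = exp (x log (1+t))`. -/
noncomputable def carlitz (r : ℕ) (n : ℕ) (x : ℝ) : ℝ :=
  (n.factorial : ℝ) * PowerSeries.coeff n
    (Dlog⁻¹ ^ r * psComp (PowerSeries.rescale x (PowerSeries.exp ℝ)) logSeries)


lemma logSeries_const : constantCoeff logSeries = 0 := by
  simp [logSeries, ← coeff_zero_eq_constantCoeff]

lemma coeff_logSeries_pow_of_lt : ∀ {m n : ℕ}, n < m → coeff n (logSeries ^ m) = 0 := by
  intro m
  induction m with
  | zero => omega
  | succ m ih =>
    intro n h
    rw [pow_succ, coeff_mul]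
    apply Finset.sum_eq_zero
    rintro ⟨p, q⟩ hpq
    rw [Finset.HasAntidiagonal.mem_antidiagonal] at hpq
    rcases lt_or_ge p m with hp | hp
    · rw [ih hp, zero_mul]
    · have hq : q = 0 := by omega
      subst hq
      rw [coeff_zero_eq_constantCoeff, logSeries_const, mul_zero]

noncomputable def SN (F : PowerSeries ℝ) (N : ℕ) : PowerSeries ℝ :=
  ∑ m ∈ Finset.range N, C (coeff m F) * logSeries ^ m

lemma coeff_SN (F : PowerSeries ℝ) (N n : ℕ) :
    coeff n (SN F N) = ∑ m ∈ Finset.range N, coeff m F * coeff n (logSeries ^ m) := by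
  simp [SN, coeff_C_mul]

lemma coeff_psComp_eq (F : PowerSeries ℝ) {n N : ℕ} (h : n < N) :
    coeff n (psComp F logSeries) = coeff n (SN F N) := by
  rw [coeff_SN, psComp, coeff_mk]
  apply Finset.sum_subset (Finset.range_subset_range.2 h)
  intro m hm hnm
  rw [Finset.mem_range, not_lt] at hnm
  rw [coeff_logSeries_pow_of_lt (by omega), mul_zero]

lemma derivative_logSeries : d⁄dX ℝ logSeries = PowerSeries.mk fun n => (-1) ^ n := by
  ext n
  rw [coeff_derivative, coeff_mk, logSeries, coeff_mk]
  simp only [Nat.succ_ne_zero, if_false]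
  have h1 : ((n : ℝ) + 1) ≠ 0 := by positivity
  push_cast
  field_simp
  ring

lemma oneX_mul : ((1 : PowerSeries ℝ) + X) * (PowerSeries.mk fun n => (-1 : ℝ) ^ n) = 1 := by
  ext n
  rw [add_mul, one_mul, map_add]
  cases n with
  | zero => simp [coeff_zero_X_mul, ← coeff_zero_eq_constantCoeff]
  | succ n =>
    rw [coeff_succ_X_mul, coeff_mk, coeff_mk, coeff_one]
    simp [pow_succ]

lemma lif_step (k : ℤ) (m : ℕ) :
    coeff m (Lif (k - 1)) = coeff m (Lif k) * ((m : ℝ) + 1) := by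
  rw [Lif, Lif, coeff_mk, coeff_mk]
  have h1 : ((m : ℝ) + 1) ≠ 0 := by positivity
  have h2 : ((m.factorial : ℝ)) ≠ 0 := by positivity
  rw [zpow_sub_one₀ h1]
  field_simp

lemma AB (k : ℤ) (N : ℕ) :
    SN (Lif (k - 1)) N = (1 + X) * d⁄dX ℝ (logSeries * SN (Lif k) N) := by
  have h1 : logSeries * SN (Lif k) N
      = ∑ m ∈ Finset.range N, C (coeff m (Lif k)) * logSeries ^ (m + 1) := by
    rw [SN, Finset.mul_sum]
    exact Finset.sum_congr rfl fun m _ => by ring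
  rw [h1, map_sum, Finset.mul_sum, SN]
  apply Finset.sum_congr rfl
  intro m hm
  rw [Derivation.leibniz, derivative_C, smul_zero, add_zero, smul_eq_mul,
    Derivation.leibniz_pow, Nat.add_sub_cancel, nsmul_eq_mul, smul_eq_mul,
    derivative_logSeries]
  have key : C (coeff m (Lif (k - 1)))
      = C (coeff m (Lif k)) * ((m + 1 : ℕ) : ℝ⟦X⟧) := by
    rw [← map_natCast C (m + 1), ← map_mul]
    congr 1
    rw [lif_step]
    push_cast
    ring
  linear_combination (logSeries ^ m) * key
    - (C (coeff m (Lif k)) * ((m + 1 : ℕ) : ℝ⟦X⟧) * logSeries ^ m) * oneX_mul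

lemma coeff_rescale_exp (m : ℕ) :
    coeff m (rescale (-1) (exp ℝ)) = (-1) ^ m / m.factorial := by
  rw [coeff_rescale, coeff_exp]
  have : (algebraMap ℚ ℝ) (1 / (m.factorial : ℚ)) = 1 / (m.factorial : ℝ) := by
    push_cast [map_div₀]
    norm_num
  rw [this]
  ring

lemma D_SN (F : PowerSeries ℝ) (N : ℕ) :
    d⁄dX ℝ (SN F (N + 1)) =
      (∑ m ∈ Finset.range N, C (((m : ℝ) + 1) * coeff (m + 1) F) * logSeries ^ m) *
        (PowerSeries.mk fun n => (-1 : ℝ) ^ n) := by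
  rw [SN, Finset.sum_range_succ' _ N, map_add, map_sum, Finset.sum_mul]
  have h0 : d⁄dX ℝ (C (coeff 0 F) * logSeries ^ 0) = 0 := by
    rw [pow_zero, mul_one, derivative_C]
  rw [h0, add_zero]
  apply Finset.sum_congr rfl
  intro m hm
  rw [Derivation.leibniz, derivative_C, smul_zero, add_zero, smul_eq_mul,
    Derivation.leibniz_pow, Nat.add_sub_cancel, nsmul_eq_mul, smul_eq_mul,
    derivative_logSeries]
  rw [show (C (((m : ℝ) + 1) * coeff (m + 1) F))
      = C ((coeff (m+1)) F) * C ((m : ℝ) + 1) by rw [← map_mul]; ring_nf]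
  have : ((m + 1 : ℕ) : ℝ⟦X⟧) = C ((m : ℝ) + 1) := by
    rw [← map_natCast C (m + 1)]; push_cast; ring_nf
  rw [this]
  ring

lemma E_coeff : ∀ j : ℕ, coeff j (psComp (rescale (-1) (exp ℝ)) logSeries) = (-1) ^ j := by
  intro j
  induction j using Nat.strong_induction_on with
  | _ j ih =>
    rcases j with _ | j
    · simp [psComp, coeff_rescale_exp]
    · have key : d⁄dX ℝ (SN (rescale (-1) (exp ℝ)) (j + 2)) =
          -(SN (rescale (-1) (exp ℝ)) (j + 1) * (PowerSeries.mk fun n => (-1 : ℝ) ^ n)) := by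
        rw [D_SN, ← neg_mul, SN, ← Finset.sum_neg_distrib]
        congr 1
        apply Finset.sum_congr rfl
        intro m hm
        rw [← neg_mul, ← map_neg]
        congr 2
        rw [coeff_rescale_exp, coeff_rescale_exp, Nat.factorial_succ]
        have h1 : ((m : ℝ) + 1) ≠ 0 := by positivity
        have h2 : ((m.factorial : ℝ)) ≠ 0 := by positivity
        push_cast
        field_simp
        ring
      have e1 : coeff j (d⁄dX ℝ (SN (rescale (-1) (exp ℝ)) (j + 2))) =
          coeff (j + 1) (SN (rescale (-1) (exp ℝ)) (j + 2)) * ((j : ℝ) + 1) :=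
        coeff_derivative _ _
      rw [key] at e1
      rw [← coeff_psComp_eq _ (by omega)] at e1
      have e2 : coeff j (-(SN (rescale (-1) (exp ℝ)) (j + 1) *
          (PowerSeries.mk fun n => (-1 : ℝ) ^ n))) = (-1) ^ (j + 1) * ((j : ℝ) + 1) := by
        rw [map_neg, coeff_mul, Finset.Nat.sum_antidiagonal_eq_sum_range_succ_mk]
        have h3 : ∀ p ∈ Finset.range (j + 1),
            coeff p (SN (rescale (-1) (exp ℝ)) (j + 1)) *
              coeff (j - p) (PowerSeries.mk fun n => (-1 : ℝ) ^ n) = (-1) ^ j := by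
          intro p hp
          rw [Finset.mem_range] at hp
          rw [← coeff_psComp_eq _ hp, ih p hp, coeff_mk, ← pow_add,
            Nat.add_sub_cancel' (by omega : p ≤ j)]
        rw [Finset.sum_congr rfl h3, Finset.sum_const, Finset.card_range]
        push_cast
        ring
      rw [e2] at e1
      have h1 : ((j : ℝ) + 1) ≠ 0 := by positivity
      exact mul_right_cancel₀ h1 e1.symm

lemma E_eq : psComp (rescale (-1) (exp ℝ)) logSeries = PowerSeries.mk fun n => (-1 : ℝ) ^ n := by
  ext n
  rw [coeff_mk]
  exact E_coeff n

lemma psComp_one : psComp 1 logSeries = 1 := by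
  ext n
  rw [psComp, coeff_mk]
  rw [Finset.sum_eq_single 0]
  · simp
  · intro m _ hne
    rw [coeff_one, if_neg hne, zero_mul]
  · intro h
    exact absurd (Finset.mem_range.2 (by omega)) h

lemma rescale_zero_exp : rescale (0 : ℝ) (exp ℝ) = 1 := by
  rw [rescale_zero]
  simp

/-- special case of Theorem 5 of the paper. -/
theorem polyCauchy_one_eq_sum (k : ℤ) (n : ℕ) (hn : 1 ≤ n) :
    polyCauchy (k - 1) (n - 1) 1 =
      ∑ l ∈ Finset.range n,
        (-1 : ℝ) ^ l * (l.factorial : ℝ) * (n.choose (l + 1) : ℝ) *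
          polyCauchy k (n - l - 1) 0 := by
  have hB0 : ∀ m : ℕ, polyCauchy k m 0
      = (m.factorial : ℝ) * coeff m (psComp (Lif k) logSeries) := by
    intro m
    rw [polyCauchy, neg_zero, rescale_zero_exp, psComp_one, mul_one]
  rw [polyCauchy, E_eq]
  have hA : coeff (n - 1) (psComp (Lif (k - 1)) logSeries *
        PowerSeries.mk fun j => (-1 : ℝ) ^ j)
      = coeff (n - 1) (SN (Lif (k - 1)) (n + 1) * PowerSeries.mk fun j => (-1 : ℝ) ^ j) := by
    rw [coeff_mul, coeff_mul]
    apply Finset.sum_congr rfl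
    rintro ⟨p, q⟩ hpq
    rw [Finset.HasAntidiagonal.mem_antidiagonal] at hpq
    rw [coeff_psComp_eq _ (show p < n + 1 by omega)]
  rw [hA]
  have hstep : SN (Lif (k - 1)) (n + 1) * (PowerSeries.mk fun j => (-1 : ℝ) ^ j)
      = d⁄dX ℝ (logSeries * SN (Lif k) (n + 1)) := by
    rw [AB k (n + 1)]
    linear_combination (d⁄dX ℝ (logSeries * SN (Lif k) (n + 1))) * oneX_mul
  rw [hstep]
  have hd : coeff (n - 1) (d⁄dX ℝ (logSeries * SN (Lif k) (n + 1)))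
      = coeff n (logSeries * SN (Lif k) (n + 1)) * (n : ℝ) := by
    rw [coeff_derivative, show n - 1 + 1 = n from by omega]
    congr 1
    rw [Nat.cast_sub hn]
    push_cast
    ring
  rw [hd, coeff_mul, Finset.Nat.sum_antidiagonal_eq_sum_range_succ_mk]
  have hrep : ∀ p ∈ Finset.range (n + 1),
      coeff p logSeries * coeff (n - p) (SN (Lif k) (n + 1))
        = coeff p logSeries * coeff (n - p) (psComp (Lif k) logSeries) := by
    intro p _
    rw [← coeff_psComp_eq _ (show n - p < n + 1 by omega)]
  rw [Finset.sum_congr rfl hrep, Finset.sum_range_succ']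
  have h00 : coeff 0 logSeries * coeff (n - 0) (psComp (Lif k) logSeries) = 0 := by
    rw [coeff_zero_eq_constantCoeff, logSeries_const, zero_mul]
  rw [h00, add_zero, Finset.sum_mul, Finset.mul_sum]
  apply Finset.sum_congr rfl
  intro l hl
  rw [Finset.mem_range] at hl
  have hcl : coeff (l + 1) logSeries = (-1 : ℝ) ^ l / ((l : ℝ) + 1) := by
    rw [logSeries, coeff_mk, if_neg (Nat.succ_ne_zero l)]
    push_cast
    rw [pow_succ, pow_succ]
    ring
  rw [hB0, show n - (l + 1) = n - l - 1 from by omega, hcl]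
  have hfac : ((n.choose (l + 1) : ℝ) * ((l + 1).factorial : ℝ) * ((n - l - 1).factorial : ℝ))
      = (n.factorial : ℝ) := by
    have := Nat.choose_mul_factorial_mul_factorial (show l + 1 ≤ n from hl)
    rw [show n - (l + 1) = n - l - 1 from by omega] at this
    exact_mod_cast this
  have hfac2 : ((n : ℝ) * ((n - 1).factorial : ℝ)) = (n.factorial : ℝ) := by
    exact_mod_cast Nat.mul_factorial_pred (by omega)
  have h1 : ((l : ℝ) + 1) ≠ 0 := by positivity
  rw [Nat.factorial_succ] at hfac
  push_cast at hfac ⊢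
  field_simp
  linear_combination (coeff (n - l - 1) (psComp (Lif k) logSeries) * (-1) ^ l) *
      ((l : ℝ) + 1) * hfac2 - (coeff (n - l - 1) (psComp (Lif k) logSeries) * (l : ℝ) * (-1) ^ l) * hfac2 - (coeff (n - l - 1) (psComp (Lif k) logSeries) * (-1) ^ l) * hfac
      + (coeff (n - l - 1) (psComp (Lif k) logSeries) * (1 - (-1) ^ l)) * hfac2
      - (coeff (n - l - 1) (psComp (Lif k) logSeries) * (1 - (-1) ^ l)) * hfac
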